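/- Let D be a triangulated category. An object P of D is partial silting if and only if P is presilting (Hom(P, Σ^n P) = 0 for all n > 0) and the smallest suspended subcategory susp(P) containing P is an aisle (i.e., the inclusion susp(P) → D admits a right adjoint). -/

import Mathlib

open CategoryTheory Limits Pretriangulated ZeroObject

universe v u

namespace Paper

variable {C : Type u} [Category.{v} C] [Preadditive C] [HasZeroObject C]
  [HasShift C ℤ] [∀ n : ℤ, (CategoryTheory.shiftFunctor C n).Additive] [Pretriangulated C]
  [HasBinaryBiproducts C]

/-- A class of objects closed under isomorphism. -/
def ClosedIso (P : C → Prop) : Prop := ∀ ⦃X Y : C⦄, (X ≅ Y) → P X → P Y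

/-- A class of objects closed under extensions. -/
def ExtClosed (P : C → Prop) : Prop :=
  ∀ T : Triangle C, T ∈ (distTriang C) → P T.obj₁ → P T.obj₃ → P T.obj₂

/-- A suspended subcategory: additive (iso-closed, contains 0, closed under finite sums via
extensions), closed under the suspension `Σ = ⟦1⟧` and under extensions. -/
structure Suspended (P : C → Prop) : Prop where
  iso : ClosedIso P
  zero : P 0
  shift : ∀ ⦃X : C⦄, P X → P (X⟦(1:ℤ)⟧)
  ext : ExtClosed P

/-- A t-structure `(L, G) = (D^{≤0}, D^{>0})`: Hom-orthogonality, every object is an extension,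
`L` is suspended; both classes are closed under isomorphism. -/
structure IsTStr (L G : C → Prop) : Prop where
  isoL : ClosedIso L
  isoG : ClosedIso G
  zeroL : L 0
  homZero : ∀ ⦃X Y : C⦄, L X → G Y → ∀ f : X ⟶ Y, f = 0
  trunc : ∀ X : C, ∃ (A B : C) (f : A ⟶ X) (g : X ⟶ B) (h : B ⟶ A⟦(1:ℤ)⟧),
    Triangle.mk f g h ∈ (distTriang C) ∧ L A ∧ G B
  shiftL : ∀ ⦃X : C⦄, L X → L (X⟦(1:ℤ)⟧)
  extL : ExtClosed L

/-- The right orthogonal `U^{⊥₀}` of a class of objects. -/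
def rightOrth (U : C → Prop) (Y : C) : Prop := ∀ X : C, U X → ∀ f : X ⟶ Y, f = 0

/-- `Y ∈ P^{⊥_{≤ m}}`: `Hom(P, Σ^i Y) = 0` for all `i ≤ m`. -/
def perpLe (P : C) (m : ℤ) (Y : C) : Prop := ∀ i : ℤ, i ≤ m → ∀ f : P ⟶ Y⟦i⟧, f = 0

/-- `Y ∈ P^{⊥_{> m}}`: `Hom(P, Σ^i Y) = 0` for all `i > m`. -/
def perpGt (P : C) (m : ℤ) (Y : C) : Prop := ∀ i : ℤ, m < i → ∀ f : P ⟶ Y⟦i⟧, f = 0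

/-- `Y ∈ P^{⊥_ℤ}`: `Hom(P, Σ^i Y) = 0` for all integers `i`. -/
def perpZ (P : C) (Y : C) : Prop := ∀ i : ℤ, ∀ f : P ⟶ Y⟦i⟧, f = 0

/-- `X ∈ ^{⊥_{>0}}P`: `Hom(X, Σ^i P) = 0` for all `i > 0`. -/
def leftPerpGt0 (P : C) (X : C) : Prop := ∀ i : ℤ, 0 < i → ∀ f : X ⟶ P⟦i⟧, f = 0

/-- `susp(P)`, the smallest suspended subcategory containing `P`. -/
def suspObj (P : C) (X : C) : Prop := ∀ U : C → Prop, Suspended U → U P → U X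

/-- An additive subcategory closed under direct summands. -/
structure AddSub (U : C → Prop) : Prop where
  iso : ClosedIso U
  zero : U 0
  biprod : ∀ X Y : C, U X → U Y → U (X ⊞ Y)
  summand : ∀ X Y : C, U (X ⊞ Y) → U X

/-- `add(P)`: the additive closure of `P` (finite direct sums of direct summands). -/
def addObj (P : C) (X : C) : Prop := ∀ U : C → Prop, AddSub U → U P → U X

/-- A thick triangulated subcategory. -/
structure ThickSub (U : C → Prop) : Prop where
  iso : ClosedIso U
  zero : U 0
  shift : ∀ ⦃X : C⦄, U X → ∀ n : ℤ, U (X⟦n⟧)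
  ext : ExtClosed U
  summand : ∀ X Y : C, U (X ⊞ Y) → U X

/-- `thick(P)`: the smallest thick subcategory containing `P`. -/
def thickObj (P : C) (X : C) : Prop := ∀ U : C → Prop, ThickSub U → U P → U X

/-- A triangulated subcategory (iso-closed, shift-closed both ways, extension-closed). -/
structure TriangSub (U : C → Prop) : Prop where
  iso : ClosedIso U
  zero : U 0
  shift : ∀ ⦃X : C⦄, U X → ∀ n : ℤ, U (X⟦n⟧)
  ext : ExtClosed U

/-- `P` is presilting: `Hom(P, Σ^n P) = 0` for all `n > 0`. -/
def Presilting (P : C) : Prop := ∀ n : ℤ, 0 < n → ∀ f : P ⟶ P⟦n⟧, f = 0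

/-- `P` is partial silting: `(susp(P), P^{⊥_{≤0}})` is a t-structure and
`susp(P) ⊆ P^{⊥_{>0}}`. -/
def PartialSilting (P : C) : Prop :=
  IsTStr (suspObj P) (perpLe P 0) ∧ ∀ X : C, suspObj P X → perpGt P 0 X

/-- `S` is silting: partial silting with `susp(S) = S^{⊥_{>0}}`. -/
def Silting (S : C) : Prop :=
  PartialSilting S ∧ ∀ X : C, suspObj S X ↔ perpGt S 0 X

/-- `X ∈ D^{≤ n}` for the t-structure with aisle `L`. -/
def DLe (L : C → Prop) (n : ℤ) (X : C) : Prop := L (X⟦n⟧)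

/-- `X ∈ D^{> m}` for the t-structure with co-aisle `G`. -/
def DGt (G : C → Prop) (m : ℤ) (X : C) : Prop := G (X⟦m⟧)

/-- The t-structure `(L, G)` is bounded. -/
def BoundedTStr (L G : C → Prop) : Prop :=
  ∀ X : C, (∃ n : ℤ, DLe L n X) ∧ (∃ m : ℤ, DGt G m X)

/-- `H` is (a choice of) the `i`-th cohomology `H^i(X) = σ^{≤ i} σ^{> i-1} X` of `X` with
respect to the t-structure `(L, G)`, expressed by the two truncation triangles. -/
def IsCohomAt (L G : C → Prop) (i : ℤ) (X H : C) : Prop :=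
  ∃ (A B B' : C) (f : A ⟶ X) (g : X ⟶ B) (h : B ⟶ A⟦(1:ℤ)⟧)
    (f' : H ⟶ B) (g' : B ⟶ B') (h' : B' ⟶ H⟦(1:ℤ)⟧),
    Triangle.mk f g h ∈ (distTriang C) ∧ DLe L (i-1) A ∧ DGt G (i-1) B ∧
    Triangle.mk f' g' h' ∈ (distTriang C) ∧ DLe L i H ∧ DGt G i B'

/-- The heart `D^0 = D^{≤0} ∩ D^{>-1}` of the t-structure `(L, G)`. -/
def Heart (L G : C → Prop) (X : C) : Prop := L X ∧ DGt G (-1) X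

/-- A t-exact subcategory: a triangulated subcategory closed under the truncation `σ^{≤0}`
of the t-structure `(L, G)`. -/
def TExactSub (L G : C → Prop) (S : C → Prop) : Prop :=
  TriangSub S ∧
    ∀ (X A B : C) (f : A ⟶ X) (g : X ⟶ B) (h : B ⟶ A⟦(1:ℤ)⟧),
      S X → Triangle.mk f g h ∈ (distTriang C) → L A → G B → S A


/-- The class of objects `U` admits coreflections: every object has a couniversal morphism
from `U`, i.e. the inclusion of `U` admits a right adjoint. -/
def HasCoreflections (U : C → Prop) : Prop :=
  ∀ X : C, ∃ (A : C) (ε : A ⟶ X), U A ∧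
    ∀ A' : C, U A' → ∀ g : A' ⟶ X, ∃! g' : A' ⟶ A, g' ≫ ε = g

/-- `X` is a `2_S`-term object: `X ∈ add(S) * Σ add(S)`. -/
def TwoTerm (S X : C) : Prop :=
  ∃ (S₁ S₀ : C) (f : S₁ ⟶ S₀) (g : S₀ ⟶ X) (h : X ⟶ S₁⟦(1:ℤ)⟧),
    Triangle.mk f g h ∈ (distTriang C) ∧ addObj S S₁ ∧ addObj S S₀

/-- `X` is indecomposable. -/
def Indec (X : C) : Prop :=
  ¬ IsZero X ∧ ∀ Y Z : C, (X ≅ Y ⊞ Z) → IsZero Y ∨ IsZero Z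

/-- `add(A)` is contravariantly finite: every object admits a right `add(A)`-approximation. -/
def ContravFinAdd (A : C) : Prop :=
  ∀ X : C, ∃ (Q : C) (q : Q ⟶ X), addObj A Q ∧
    ∀ Q' : C, addObj A Q' → ∀ g : Q' ⟶ X, ∃ g' : Q' ⟶ Q, g' ≫ q = g

/-- `S` is a bounded silting object. -/
def BoundedSilting (S : C) : Prop :=
  Silting S ∧ BoundedTStr (suspObj S) (perpLe S 0)

/-- Hom-finiteness of `C` over a field `k`. -/
def HomFinite (k : Type w) [Field k] [Linear k C] : Prop :=
  ∀ X Y : C, FiniteDimensional k (X ⟶ Y)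

/-- The Krull–Schmidt property: every object is a finite direct sum of objects with local
endomorphism rings. -/
def KrullSchmidt : Prop :=
  ∀ X : C, ∃ l : List C, (∀ Y ∈ l, IsLocalRing (End Y)) ∧
    Nonempty (X ≅ l.foldr (· ⊞ ·) 0)

/-- A wide subcategory of the heart of the t-structure `(L, G)`: closed under isomorphisms,
extensions, kernels and cokernels (the latter two expressed via cones and cohomology). -/
structure HeartWide (L G W : C → Prop) : Prop where
  sub : ∀ ⦃X : C⦄, W X → Heart L G X
  iso : ClosedIso W
  ext : ∀ (X Y Z : C) (f : X ⟶ Y) (g : Y ⟶ Z) (h : Z ⟶ X⟦(1:ℤ)⟧),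
    W X → W Z → Heart L G Y → Triangle.mk f g h ∈ (distTriang C) → W Y
  kerCoker : ∀ (X Y Z : C) (f : X ⟶ Y) (g : Y ⟶ Z) (h : Z ⟶ X⟦(1:ℤ)⟧),
    W X → W Y → Triangle.mk f g h ∈ (distTriang C) →
    (∀ K : C, IsCohomAt L G (-1) Z K → W K) ∧ (∀ Q : C, IsCohomAt L G 0 Z Q → W Q)

/-- The subgroup of relations defining `K₀` of the thick subcategory `S`. -/
def K0Rel (S : C → Prop) : AddSubgroup (FreeAbelianGroup C) :=
  AddSubgroup.closure
    {x | (∃ X : C, ¬ S X ∧ x = FreeAbelianGroup.of X) ∨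
      ∃ T : Triangle C, T ∈ (distTriang C) ∧ S T.obj₁ ∧ S T.obj₂ ∧ S T.obj₃ ∧
        x = FreeAbelianGroup.of T.obj₂ - FreeAbelianGroup.of T.obj₁
          - FreeAbelianGroup.of T.obj₃}

/-- The Grothendieck group of the (thick) subcategory `S`. -/
abbrev K0 (S : C → Prop) := FreeAbelianGroup C ⧸ K0Rel S

/-- The class `[X]` in the Grothendieck group. -/
def K0cls (S : C → Prop) (X : C) : K0 S :=
  QuotientAddGroup.mk (FreeAbelianGroup.of X)

/-- A `2_S`-term presilting sequence `(X₁, …, X_t)` in the ambient subcategory `Amb` with respect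
to the silting object `S`, defined recursively: the last term `X` is an indecomposable `2_S`-term
presilting object, and the truncated sequence is a `2_{σ^{>0}_X T}`-term presilting sequence in
`Amb ∩ X^{⊥_ℤ}`, where `T = X ⊕ Q` is the Bongartz completion of `X`. -/
inductive PresiltSeq : (C → Prop) → C → List C → Prop
  | nil (Amb : C → Prop) (S : C) : PresiltSeq Amb S []
  | cons (Amb : C → Prop) (S X : C) (l : List C)
      (hX : Amb X) (h2 : TwoTerm S X) (hpre : Presilting X) (hind : Indec X)
      -- Bongartz completion `T = X ⊞ Q`, via an approximation triangle `S → Q → X₀ → ΣS`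
      (Q X₀ : C) (i : S ⟶ Q) (p : Q ⟶ X₀) (β : X₀ ⟶ S⟦(1:ℤ)⟧)
      (hB : Triangle.mk i p β ∈ (distTriang C)) (hX₀ : addObj X X₀)
      (happrox : ∀ X' : C, addObj X X' → ∀ g : X' ⟶ S⟦(1:ℤ)⟧, ∃ g', g' ≫ β = g)
      -- the truncation `T' = σ^{>0}_X (X ⊞ Q)`
      (T' A : C) (f : A ⟶ X ⊞ Q) (g : X ⊞ Q ⟶ T') (h : T' ⟶ A⟦(1:ℤ)⟧)
      (hTr : Triangle.mk f g h ∈ (distTriang C)) (hA : suspObj X A) (hT' : perpLe X 0 T')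
      (hrest : PresiltSeq (fun Y => Amb Y ∧ perpZ X Y) T' l) :
      PresiltSeq Amb S (l ++ [X])


section Aux

lemma suspObj_self (P : C) : suspObj P P := fun _ _ hP => hP

lemma suspended_suspObj (P : C) : Suspended (suspObj P) where
  iso := by intro X Y e hX U hU hP; exact hU.iso e (hX U hU hP)
  zero := fun U hU _ => hU.zero
  shift := by intro X hX U hU hP; exact hU.shift (hX U hU hP)
  ext := fun T hT h1 h3 U hU hP => hU.ext T hT (h1 U hU hP) (h3 U hU hP)

lemma perpLe_iso (P : C) : ClosedIso (perpLe P 0) := by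
  intro X Y e hX i hi f
  have me := (CategoryTheory.shiftFunctor C i).mapIso e
  have h0 : f ≫ me.inv = 0 := hX i hi _
  calc f = (f ≫ me.inv) ≫ me.hom := by simp
    _ = 0 := by rw [h0]; simp

lemma perpLe_shift (P : C) {Y : C} (hY : perpLe P 0 Y) {j : ℤ} (hj : j ≤ 0) :
    perpLe P 0 (Y⟦j⟧) := by
  intro i hi f
  have e := (shiftFunctorAdd' C j i (j + i) rfl).app Y
  have h0 : f ≫ e.inv = 0 := hY (j + i) (by omega) _
  calc f = (f ≫ e.inv) ≫ e.hom := by simp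
    _ = 0 := by rw [h0]; simp

lemma hom_zero_of_susp_perpLe (P : C) {X Y : C} (hX : suspObj P X) (hY : perpLe P 0 Y)
    (f : X ⟶ Y) : f = 0 := by
  let U : C → Prop := fun Z => ∀ Y' : C, perpLe P 0 Y' → ∀ g : Z ⟶ Y', g = 0
  have hU : Suspended U := by
    constructor
    · intro Z Z' e hZ Y' hY' g
      have h0 : e.hom ≫ g = 0 := hZ Y' hY' _
      calc g = e.inv ≫ e.hom ≫ g := by simp
        _ = 0 := by rw [h0]; simp
    · intro Y' _ g
      exact (Limits.isZero_zero C).eq_of_src g 0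
    · intro Z hZ Y' hY' g
      apply (CategoryTheory.shiftFunctor C (-1 : ℤ)).map_injective
      have hiso := (shiftFunctorCompIsoId C (1 : ℤ) (-1 : ℤ) (by ring)).app Z
      have h0 : hiso.inv ≫ (CategoryTheory.shiftFunctor C (-1 : ℤ)).map g = 0 :=
        hZ _ (perpLe_shift P hY' (by norm_num)) _
      calc (CategoryTheory.shiftFunctor C (-1 : ℤ)).map g
          = hiso.hom ≫ hiso.inv ≫ (CategoryTheory.shiftFunctor C (-1 : ℤ)).map g := by simp
        _ = (CategoryTheory.shiftFunctor C (-1 : ℤ)).map 0 := by rw [h0]; simp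
    · intro T hT h1 h3 Y' hY' g
      have hg : T.mor₁ ≫ g = 0 := h1 Y' hY' _
      obtain ⟨k, hk⟩ := Triangle.yoneda_exact₂ T hT g hg
      rw [hk, h3 Y' hY' k]; simp
  have hPU : U P := by
    intro Y' hY' g
    have e := (shiftFunctorZero C ℤ).app Y'
    have h0 : g ≫ e.inv = 0 := hY' 0 le_rfl _
    calc g = (g ≫ e.inv) ≫ e.hom := by simp
      _ = 0 := by rw [h0]; simp
  exact hX U hU hPU Y hY f

lemma suspended_perpGt (P : C) (hP : Presilting P) : Suspended (perpGt P 0) := by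
  constructor
  · intro X Y e hX i hi f
    have me := (CategoryTheory.shiftFunctor C i).mapIso e
    have h0 : f ≫ me.inv = 0 := hX i hi _
    calc f = (f ≫ me.inv) ≫ me.hom := by simp
      _ = 0 := by rw [h0]; simp
  · intro i _ f
    exact ((CategoryTheory.shiftFunctor C i).map_isZero (Limits.isZero_zero C)).eq_of_tgt f 0
  · intro X hX i hi f
    have e := (shiftFunctorAdd' C (1 : ℤ) i (1 + i) rfl).app X
    have h0 : f ≫ e.inv = 0 := hX (1 + i) (by omega) _
    calc f = (f ≫ e.inv) ≫ e.hom := by simp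
      _ = 0 := by rw [h0]; simp
  · intro T hT h1 h3 i hi f
    have hT' := Triangle.shift_distinguished T hT i
    have hf : f ≫ ((CategoryTheory.shiftFunctor (Triangle C) i).obj T).mor₂ = 0 :=
      h3 i hi (f ≫ ((CategoryTheory.shiftFunctor (Triangle C) i).obj T).mor₂)
    obtain ⟨k, hk⟩ := Triangle.coyoneda_exact₂ _ hT' f hf
    rw [hk, h1 i hi k]; exact Limits.zero_comp

lemma susp_shift_nonneg (P : C) : ∀ m : ℤ, 0 ≤ m → suspObj P (P⟦m⟧) := by
  refine Int.le_induction ?_ ?_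
  · exact (suspended_suspObj P).iso ((shiftFunctorZero C ℤ).app P).symm (suspObj_self P)
  · intro n _ ih
    exact (suspended_suspObj P).iso ((shiftFunctorAdd' C n 1 (n + 1) rfl).app P).symm
      ((suspended_suspObj P).shift ih)

end Aux

/-- An object `P` is partial silting if and only if it is presilting and
`susp(P)` is an aisle (the inclusion admits a right adjoint, i.e. coreflections exist). -/
theorem statement4 (P : C) :
    PartialSilting P ↔ (Presilting P ∧ HasCoreflections (suspObj P)) := by
  constructor
  · rintro ⟨hT, hsub⟩
    refine ⟨fun n hn f => hsub P (suspObj_self P) n hn f, ?_⟩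
    intro X
    obtain ⟨A, B, f, g, h, hTri, hA, hB⟩ := hT.trunc X
    refine ⟨A, f, hA, ?_⟩
    intro A' hA' g₀
    have hg : g₀ ≫ g = 0 := hT.homZero hA' hB _
    obtain ⟨g', hg'⟩ := Triangle.coyoneda_exact₂ _ hTri g₀ hg
    have hg2 : (show A' ⟶ A from g') ≫ f = g₀ := hg'.symm
    refine ⟨show A' ⟶ A from g', hg2, ?_⟩
    intro y hy
    have hd : (y - show A' ⟶ A from g') ≫ f = 0 := by
      rw [Preadditive.sub_comp, hy, hg2, sub_self]
    obtain ⟨e, he⟩ := Triangle.coyoneda_exact₂ _ (inv_rot_of_distTriang _ hTri)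
      (y - show A' ⟶ A from g') hd
    have he0 : e = 0 := hT.homZero hA' (perpLe_shift P hB (by norm_num)) e
    have hy0 : y - (show A' ⟶ A from g') = 0 := by rw [he, he0]; exact Limits.zero_comp
    exact sub_eq_zero.mp hy0
  · rintro ⟨hpre, hcor⟩
    have hSusp := suspended_suspObj P
    have hGt : ∀ X : C, suspObj P X → perpGt P 0 X := fun X hX =>
      hX (perpGt P 0) (suspended_perpGt P hpre) (fun i hi f => hpre i hi f)
    refine ⟨⟨hSusp.iso, perpLe_iso P, hSusp.zero,
      fun X Y hX hY f => hom_zero_of_susp_perpLe P hX hY f, ?_, hSusp.shift, hSusp.ext⟩, hGt⟩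
    intro X
    obtain ⟨A, ε, hA, huniv⟩ := hcor X
    obtain ⟨B, g, h, hTri⟩ := Pretriangulated.distinguished_cocone_triangle ε
    refine ⟨A, B, ε, g, h, hTri, hA, ?_⟩
    have key : ∀ m : ℤ, 0 ≤ m → ∀ u : P⟦m⟧ ⟶ B, u = 0 := by
      intro m hm u
      have hcomp : u ≫ h = 0 := by
        rcases eq_or_lt_of_le hm with hm0 | hm1
        · subst hm0
          have e := (shiftFunctorZero C ℤ).app P
          have h0 : e.inv ≫ u ≫ h = 0 := hGt A hA 1 one_pos _
          calc u ≫ h = e.hom ≫ e.inv ≫ u ≫ h := by simp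
            _ = 0 := by rw [h0]; simp
        · have eAdd := (shiftFunctorAdd' C (m - 1) 1 m (by ring)).app P
          obtain ⟨v, hv⟩ := (CategoryTheory.shiftFunctor C (1 : ℤ)).map_surjective
            (eAdd.inv ≫ u ≫ h)
          have h31 : h ≫ (CategoryTheory.shiftFunctor C (1 : ℤ)).map ε = 0 :=
            comp_distTriang_mor_zero₃₁ _ hTri
          have hvε : v ≫ ε = 0 := by
            apply (CategoryTheory.shiftFunctor C (1 : ℤ)).map_injective
            rw [Functor.map_comp, hv]
            simp only [Category.assoc, h31, Limits.comp_zero, Functor.map_zero]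
          obtain ⟨c, _, hcu⟩ := huniv _ (susp_shift_nonneg P (m - 1) (by omega))
            (0 : P⟦(m - 1 : ℤ)⟧ ⟶ X)
          have hv0 : v = 0 := by
            rw [hcu v hvε, ← hcu 0 (by simp)]
          have hw0 : eAdd.inv ≫ u ≫ h = 0 := by rw [← hv, hv0, Functor.map_zero]
          calc u ≫ h = eAdd.hom ≫ eAdd.inv ≫ u ≫ h := by simp
            _ = 0 := by rw [hw0]; simp
      obtain ⟨v, hv⟩ := Triangle.coyoneda_exact₃ _ hTri u hcomp
      have hv' : u = (show _ ⟶ X from v) ≫ g := hv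
      obtain ⟨w, hw, _⟩ := huniv _ (susp_shift_nonneg P m hm) (show _ ⟶ X from v)
      have h12 : ε ≫ g = 0 := comp_distTriang_mor_zero₁₂ _ hTri
      rw [hv', ← hw, Category.assoc, h12]; simp
    intro i hi f
    have eC := (shiftFunctorCompIsoId C i (-i) (by ring)).app B
    have h0 : (CategoryTheory.shiftFunctor C (-i)).map f ≫ eC.hom = 0 :=
      key (-i) (by omega) _
    apply (CategoryTheory.shiftFunctor C (-i)).map_injective
    rw [Functor.map_zero]
    calc (CategoryTheory.shiftFunctor C (-i)).map f
        = ((CategoryTheory.shiftFunctor C (-i)).map f ≫ eC.hom) ≫ eC.inv := by simp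
      _ = 0 := by rw [h0]; simp

end Paper
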